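/- Let ℓ ≤ s be natural numbers with ℓ ≥ 1, and for 1 ≤ k ≤ s and 1 ≤ i ≤ ℓ define integers α_{s,ℓ}(k,i) by downward recursion on i: α_{s,ℓ}(k,i) := C(s−i, k−i) − Σ_{j=i+1}^{ℓ} α_{s,ℓ}(k,j) · C(s−i, j−i), where C(·,·) denotes a binomial coefficient (so α_{s,ℓ}(k,ℓ) = C(s−ℓ, k−ℓ)). Then for every i with 1 ≤ i ≤ ℓ, the polynomial Σ_{k=1}^{s} α_{s,ℓ}(k,i) · q^{s−k} · (1−q)^{k} in the variable q has degree at most ℓ. -/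

import Mathlib

open Polynomial

/-- The binomial coefficient `C(s−i, k−i)`, interpreted as `0` when `k < i`
(i.e. when the lower index `k − i` would be negative). -/
def binShift (s k i : ℕ) : ℤ :=
  if i ≤ k then ((s - i).choose (k - i) : ℤ) else 0

/-- `alphaCoef s ℓ k i = α_{s,ℓ}(k,i)`, defined by downward recursion on `i`:
`α_{s,ℓ}(k,i) = C(s−i, k−i) − Σ_{j=i+1}^{ℓ} α_{s,ℓ}(k,j) · C(s−i, j−i)`. -/
def alphaCoef (s ℓ k i : ℕ) : ℤ :=
  binShift s k i -
    ∑ j ∈ (Finset.Ioc i ℓ).attach,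
      alphaCoef s ℓ k j.1 * (((s - i).choose (j.1 - i) : ℕ) : ℤ)
termination_by ℓ - i
decreasing_by
  have h := Finset.mem_Ioc.mp j.2
  omega

lemma binom_one (n : ℕ) :
    ∑ m ∈ Finset.range (n + 1),
        ((n.choose m : ℕ) : Polynomial ℝ) * X ^ (n - m) * (1 - X) ^ m = 1 := by
  have h := add_pow (1 - X : Polynomial ℝ) X n
  have h2 : (1 - X + X : Polynomial ℝ) = 1 := by ring
  rw [h2, one_pow] at h
  calc ∑ m ∈ Finset.range (n + 1),
        ((n.choose m : ℕ) : Polynomial ℝ) * X ^ (n - m) * (1 - X) ^ m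
      = ∑ m ∈ Finset.range (n + 1),
        (1 - X : Polynomial ℝ) ^ m * X ^ (n - m) * ((n.choose m : ℕ) : Polynomial ℝ) := by
        apply Finset.sum_congr rfl; intro m hm; ring
    _ = 1 := h.symm

lemma deg_one_sub_X_pow (i : ℕ) :
    ((1 - X : Polynomial ℝ) ^ i).degree ≤ (i : WithBot ℕ) := by
  apply le_trans (degree_pow_le _ _)
  have hd : (1 - X : Polynomial ℝ).degree ≤ 1 := by
    apply le_trans (degree_sub_le _ _)
    simp [degree_X, degree_one]
  calc i • (1 - X : Polynomial ℝ).degree ≤ i • (1 : WithBot ℕ) := nsmul_le_nsmul_right hd i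
    _ = (i : WithBot ℕ) := by simp

lemma binShift_sum (s i : ℕ) (hi : 1 ≤ i) (his : i ≤ s) :
    ∑ k ∈ Finset.Icc 1 s, ((binShift s k i : ℤ) : Polynomial ℝ) * X ^ (s - k) * (1 - X) ^ k
      = (1 - X) ^ i := by
  rw [← Finset.sum_subset (Finset.Icc_subset_Icc_left hi) (by
    intro k hk hk'
    have h1 := Finset.mem_Icc.mp hk
    have h2 : ¬ i ≤ k := by
      intro h
      exact hk' (Finset.mem_Icc.mpr ⟨h, h1.2⟩)
    simp [binShift, h2])]
  rw [← Finset.Ico_add_one_right_eq_Icc, Finset.sum_Ico_eq_sum_range]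
  have hr : s + 1 - i = s - i + 1 := by omega
  rw [hr]
  have hcong : ∀ m ∈ Finset.range (s - i + 1),
      ((binShift s (i + m) i : ℤ) : Polynomial ℝ) * X ^ (s - (i + m)) * (1 - X) ^ (i + m)
      = (1 - X) ^ i *
        ((((s - i).choose m : ℕ) : Polynomial ℝ) * X ^ ((s - i) - m) * (1 - X) ^ m) := by
    intro m hm
    have h1 : binShift s (i + m) i = (((s - i).choose m : ℕ) : ℤ) := by
      have hle : i ≤ i + m := Nat.le_add_right i m
      have hm2 : i + m - i = m := by omega
      simp only [binShift, if_pos hle, hm2]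
    rw [h1]
    have h2 : s - (i + m) = (s - i) - m := by omega
    rw [h2, pow_add]
    push_cast
    ring
  rw [Finset.sum_congr rfl hcong, ← Finset.mul_sum, binom_one, mul_one]

lemma P_rec (s ℓ i : ℕ) (hi : 1 ≤ i) (hiℓ : i ≤ ℓ) (hℓs : ℓ ≤ s) :
    (∑ k ∈ Finset.Icc 1 s,
        ((alphaCoef s ℓ k i : ℤ) : Polynomial ℝ) * X ^ (s - k) * (1 - X) ^ k)
    = (1 - X) ^ i - ∑ j ∈ (Finset.Ioc i ℓ).attach,
        (((s - i).choose (j.1 - i) : ℕ) : Polynomial ℝ) *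
        ∑ k ∈ Finset.Icc 1 s,
          ((alphaCoef s ℓ k j.1 : ℤ) : Polynomial ℝ) * X ^ (s - k) * (1 - X) ^ k := by
  have hunf : ∀ k, ((alphaCoef s ℓ k i : ℤ) : Polynomial ℝ)
      = ((binShift s k i : ℤ) : Polynomial ℝ) -
        ∑ j ∈ (Finset.Ioc i ℓ).attach,
          ((alphaCoef s ℓ k j.1 : ℤ) : Polynomial ℝ) *
            (((s - i).choose (j.1 - i) : ℕ) : Polynomial ℝ) := by
    intro k
    rw [alphaCoef]
    push_cast
    ring
  calc (∑ k ∈ Finset.Icc 1 s,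
        ((alphaCoef s ℓ k i : ℤ) : Polynomial ℝ) * X ^ (s - k) * (1 - X) ^ k)
      = ∑ k ∈ Finset.Icc 1 s,
        (((binShift s k i : ℤ) : Polynomial ℝ) * X ^ (s - k) * (1 - X) ^ k -
          ∑ j ∈ (Finset.Ioc i ℓ).attach,
            (((s - i).choose (j.1 - i) : ℕ) : Polynomial ℝ) *
              (((alphaCoef s ℓ k j.1 : ℤ) : Polynomial ℝ) * X ^ (s - k) * (1 - X) ^ k)) := by
        apply Finset.sum_congr rfl
        intro k hk
        rw [hunf k, sub_mul, sub_mul, Finset.sum_mul, Finset.sum_mul]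
        congr 1
        apply Finset.sum_congr rfl
        intro j hj
        ring
    _ = (∑ k ∈ Finset.Icc 1 s,
          ((binShift s k i : ℤ) : Polynomial ℝ) * X ^ (s - k) * (1 - X) ^ k) -
        ∑ k ∈ Finset.Icc 1 s, ∑ j ∈ (Finset.Ioc i ℓ).attach,
            (((s - i).choose (j.1 - i) : ℕ) : Polynomial ℝ) *
              (((alphaCoef s ℓ k j.1 : ℤ) : Polynomial ℝ) * X ^ (s - k) * (1 - X) ^ k) := by
        rw [Finset.sum_sub_distrib]
    _ = (1 - X) ^ i - ∑ j ∈ (Finset.Ioc i ℓ).attach,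
        (((s - i).choose (j.1 - i) : ℕ) : Polynomial ℝ) *
        ∑ k ∈ Finset.Icc 1 s,
          ((alphaCoef s ℓ k j.1 : ℤ) : Polynomial ℝ) * X ^ (s - k) * (1 - X) ^ k := by
        rw [binShift_sum s i hi (le_trans hiℓ hℓs), Finset.sum_comm]
        congr 1
        apply Finset.sum_congr rfl
        intro j hj
        rw [Finset.mul_sum]

lemma deg_bound (s ℓ : ℕ) (hℓs : ℓ ≤ s) (n : ℕ) :
    ∀ i, 1 ≤ i → i ≤ ℓ → ℓ - i ≤ n →
      (∑ k ∈ Finset.Icc 1 s,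
          ((alphaCoef s ℓ k i : ℤ) : Polynomial ℝ) * X ^ (s - k) * (1 - X) ^ k).degree
        ≤ (ℓ : WithBot ℕ) := by
  induction n with
  | zero =>
    intro i h1 h2 h3
    have hil : i = ℓ := by omega
    subst hil
    rw [P_rec s i i h1 le_rfl hℓs, Finset.Ioc_self]
    simp only [Finset.attach_empty, Finset.sum_empty, sub_zero]
    exact deg_one_sub_X_pow i
  | succ n ih =>
    intro i h1 h2 h3
    rw [P_rec s ℓ i h1 h2 hℓs]
    apply le_trans (degree_sub_le _ _)
    rw [max_le_iff]
    constructor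
    · exact le_trans (deg_one_sub_X_pow i) (by exact_mod_cast h2)
    · apply le_trans (degree_sum_le _ _)
      rw [Finset.sup_le_iff]
      intro j hj
      have hjm := Finset.mem_Ioc.mp j.2
      have hP := ih j.1 (by omega) hjm.2 (by omega)
      calc ((((s - i).choose (j.1 - i) : ℕ) : Polynomial ℝ) *
              ∑ k ∈ Finset.Icc 1 s,
                ((alphaCoef s ℓ k j.1 : ℤ) : Polynomial ℝ) * X ^ (s - k) * (1 - X) ^ k).degree
          ≤ (∑ k ∈ Finset.Icc 1 s,
                ((alphaCoef s ℓ k j.1 : ℤ) : Polynomial ℝ) * X ^ (s - k) * (1 - X) ^ k).degree := by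
            rw [← Polynomial.C_eq_natCast]
            apply le_trans (degree_mul_le _ _)
            calc (C ((((s - i).choose (j.1 - i) : ℕ)) : ℝ)).degree +
                  (∑ k ∈ Finset.Icc 1 s,
                    ((alphaCoef s ℓ k j.1 : ℤ) : Polynomial ℝ) * X ^ (s - k) * (1 - X) ^ k).degree
                ≤ 0 + (∑ k ∈ Finset.Icc 1 s,
                    ((alphaCoef s ℓ k j.1 : ℤ) : Polynomial ℝ) * X ^ (s - k) * (1 - X) ^ k).degree :=
                  add_le_add degree_C_le le_rfl
              _ = _ := zero_add _
        _ ≤ (ℓ : WithBot ℕ) := hP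

theorem stmt3 (s ℓ : ℕ) (hℓ : 1 ≤ ℓ) (hℓs : ℓ ≤ s) (i : ℕ) (hi : 1 ≤ i) (hiℓ : i ≤ ℓ) :
    (∑ k ∈ Finset.Icc 1 s,
        ((alphaCoef s ℓ k i : ℤ) : Polynomial ℝ) * X ^ (s - k) * (1 - X) ^ k).degree
      ≤ (ℓ : WithBot ℕ) := by
  exact deg_bound s ℓ hℓs (ℓ - i) i hi hiℓ le_rfl
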